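/- arXiv:1304.2132 — 3 statements merged into one kernel-verified Lean document; each statement's English description precedes it below -/
import Mathlib

section
/- Let C_n be the cycle graph on n > 2 vertices with n odd, and Δ(s) = s²(D − I) − sA + I its deformed Laplacian. For every real s with s ≠ 1, the matrix Δ(s) is positive definite (equivalently, the system ẋ = −Δ(s)x is asymptotically stable). -/
open Matrix Filter

/-- The degree matrix of a graph given by its adjacency matrix: the diagonal matrix of
row sums of `A`. -/
noncomputable def degMat {V : Type} [Fintype V] [DecidableEq V] (A : Matrix V V ℝ) :
    Matrix V V ℝ :=
  Matrix.diagonal fun i => ∑ j, A i j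

/-- The deformed Laplacian `Δ(s) = s²(D − I) − sA + I`. -/
noncomputable def defLap {V : Type} [Fintype V] [DecidableEq V] (A : Matrix V V ℝ) (s : ℝ) :
    Matrix V V ℝ :=
  s ^ 2 • (degMat A - 1) - s • A + 1

/-- Adjacency matrix of the cycle graph `C_n` on vertices `0,…,n−1` (mod `n`):
`i` and `j` are adjacent iff `i − j ≡ ±1 (mod n)`. -/
noncomputable def cycAdj (n : ℕ) : Matrix (Fin n) (Fin n) ℝ :=
  fun i j => if ((i : ℕ) + 1) % n = (j : ℕ) ∨ ((j : ℕ) + 1) % n = (i : ℕ) then 1 else 0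

lemma cycAdj_eq (n : ℕ) [NeZero n] (hn : 2 < n) (i j : Fin n) :
    cycAdj n i j = (if i + 1 = j then (1:ℝ) else 0) + (if j + 1 = i then 1 else 0) := by
  have h1 : (1 : Fin n).val = 1 := by
    simp [Fin.val_one, Nat.mod_eq_of_lt (by omega : 1 < n)]
  have hadd : ∀ a b : Fin n, a + 1 = b ↔ ((a:ℕ)+1) % n = (b:ℕ) := by
    intro a b
    rw [Fin.ext_iff, Fin.val_add, h1]
  have hne : ¬(i + 1 = j ∧ j + 1 = i) := by
    rintro ⟨rfl, h⟩
    rw [add_assoc] at h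
    have h2 : (1 + 1 : Fin n) = 0 := by
      have := add_eq_left.mp h
      exact this
    have : ((1:Fin n) + 1).val = 2 := by
      rw [Fin.val_add, h1]
      simpa using Nat.mod_eq_of_lt (by omega : 2 < n)
    rw [h2] at this
    simp at this
  unfold cycAdj
  simp only [← hadd]
  by_cases hp : i + 1 = j <;> by_cases hq : j + 1 = i <;>
    simp [hp, hq] <;> tauto

lemma cycAdj_deg (n : ℕ) [NeZero n] (hn : 2 < n) (i : Fin n) :
    ∑ j, cycAdj n i j = 2 := by
  have h2 : ∀ j : Fin n, (j + 1 = i) = (j = i - 1) := by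
    intro j; simp [eq_sub_iff_add_eq]
  simp only [cycAdj_eq n hn, Finset.sum_add_distrib, h2]
  rw [Finset.sum_ite_eq, Finset.sum_ite_eq']
  norm_num

lemma cycAdj_mulVec (n : ℕ) [NeZero n] (hn : 2 < n) (x : Fin n → ℝ) (i : Fin n) :
    (cycAdj n *ᵥ x) i = x (i + 1) + x (i - 1) := by
  simp only [mulVec, dotProduct, cycAdj_eq n hn, add_mul, ite_mul, one_mul, zero_mul,
    Finset.sum_add_distrib]
  congr 1
  · rw [Finset.sum_ite_eq]
    simp
  · have : ∀ j : Fin n, (j + 1 = i) = (j = i - 1) := by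
      intro j
      simp [eq_sub_iff_add_eq]
    simp only [this]
    rw [Finset.sum_ite_eq']
    simp

lemma defLap_quadForm (n : ℕ) [NeZero n] (hn : 2 < n) (s : ℝ) (x : Fin n → ℝ) :
    x ⬝ᵥ (defLap (cycAdj n) s *ᵥ x) = ∑ i, (s * x i - x (i + 1)) ^ 2 := by
  have hmv : ∀ i, (defLap (cycAdj n) s *ᵥ x) i
      = s ^ 2 * x i + x i - s * (x (i + 1) + x (i - 1)) := by
    intro i
    simp only [defLap, add_mulVec, sub_mulVec, smul_mulVec, one_mulVec,
      Pi.add_apply, Pi.sub_apply, Pi.smul_apply, smul_eq_mul, cycAdj_mulVec n hn]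
    have : (degMat (cycAdj n) *ᵥ x) i = 2 * x i := by
      simp [degMat, mulVec_diagonal, cycAdj_deg n hn]
    rw [this]
    ring
  have hA : ∑ i, x i * x (i - 1) = ∑ i, x i * x (i + 1) := by
    refine (Fintype.sum_equiv (Equiv.addRight (1 : Fin n))
      (fun i => x i * x (i + 1)) (fun i => x i * x (i - 1)) ?_).symm
    intro i
    simp [mul_comm]
  have hB : ∑ i, x (i + 1) ^ 2 = ∑ i, x i ^ 2 := by
    refine Fintype.sum_equiv (Equiv.addRight (1 : Fin n))
      (fun i => x (i + 1) ^ 2) (fun i => x i ^ 2) ?_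
    intro i
    simp
  have L : x ⬝ᵥ (defLap (cycAdj n) s *ᵥ x)
      = (s ^ 2 + 1) * ∑ i, x i ^ 2 - s * ∑ i, x i * x (i + 1)
        - s * ∑ i, x i * x (i - 1) := by
    simp only [dotProduct, hmv, Finset.mul_sum, ← Finset.sum_sub_distrib]
    exact Finset.sum_congr rfl fun i _ => by ring
  have R : ∑ i, (s * x i - x (i + 1)) ^ 2
      = s ^ 2 * ∑ i, x i ^ 2 - 2 * s * ∑ i, x i * x (i + 1) + ∑ i, x (i + 1) ^ 2 := by
    simp only [Finset.mul_sum, ← Finset.sum_sub_distrib, ← Finset.sum_add_distrib]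
    exact Finset.sum_congr rfl fun i _ => by ring
  rw [L, R, hA, hB]
  ring

open Fin.NatCast

/-- For the cycle graph `C_n` with `n > 2` odd and every `s ≠ 1`,
`Δ(s)` is positive definite. -/
theorem cycle_odd_defLap_posDef (n : ℕ) (hn : 2 < n) (hodd : Odd n) (s : ℝ)
    (hs : s ≠ 1) : (defLap (cycAdj n) s).PosDef := by
  haveI : NeZero n := ⟨by omega⟩
  rw [posDef_iff_dotProduct_mulVec]
  constructor
  · -- Hermitian
    have hA : (cycAdj n)ᵀ = cycAdj n := by
      ext i j
      simp only [transpose_apply, cycAdj]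
      exact if_congr or_comm rfl rfl
    show (defLap (cycAdj n) s)ᴴ = _
    rw [conjTranspose_eq_transpose_of_trivial]
    simp [defLap, transpose_add, transpose_sub, transpose_smul, transpose_one, degMat,
      diagonal_transpose, hA]
  · intro x hx
    rw [show star x = x from rfl, defLap_quadForm n hn s x]
    have hnonneg : ∀ i ∈ Finset.univ, (0:ℝ) ≤ (s * x i - x (i + 1)) ^ 2 :=
      fun i _ => sq_nonneg _
    rcases (Finset.sum_nonneg hnonneg).lt_or_eq with h | h
    · exact h
    exfalso
    have hzero : ∀ i : Fin n, x (i + 1) = s * x i := by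
      intro i
      have := (Finset.sum_eq_zero_iff_of_nonneg hnonneg).mp h.symm i (Finset.mem_univ i)
      have := pow_eq_zero_iff (n := 2) (by norm_num) |>.mp this
      linarith
    have key : ∀ k : ℕ, x (k : Fin n) = s ^ k * x 0 := by
      intro k
      induction k with
      | zero => simp
      | succ k ih =>
        have : ((k + 1 : ℕ) : Fin n) = (k : Fin n) + 1 := by push_cast; ring
        rw [this, hzero, ih, pow_succ]
        ring
    have hx0 : x 0 = s ^ n * x 0 := by
      have := key n
      rwa [Fin.natCast_self] at this
    by_cases h0 : x 0 = 0
    · apply hx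
      funext i
      have := key (i : ℕ)
      rw [Fin.cast_val_eq_self] at this
      simp [this, h0]
    · have hpow : s ^ n = 1 := by
        have : (s ^ n - 1) * x 0 = 0 := by linarith [hx0]
        rcases mul_eq_zero.mp this with h | h
        · linarith
        · exact absurd h h0
      exact hs (hodd.strictMono_pow (R := ℝ) |>.injective (by simpa using hpow))
end

section
/- Let C_n be the cycle graph on n > 2 vertices with n even, let Q = Δ(−1) = D + A be its signless Laplacian, and let k ∈ ℝⁿ be the alternating vector k_i = (−1)^i for i ∈ {0,…,n−1}. Then for every initial vector x₀ ∈ ℝⁿ, exp(−tQ)·x₀ converges, as t → ∞, to (1/n)·(kᵀx₀)·k; in particular n/2 of the states converge to (1/n)kᵀx₀ and the other n/2 converge to −(1/n)kᵀx₀. -/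
open Matrix Filter

section Aux

variable {n : ℕ} [NeZero n]

lemma val_add_one (hn : 2 < n) (i : Fin n) : ((i + 1 : Fin n) : ℕ) = ((i : ℕ) + 1) % n := by
  have h1 : ((1 : Fin n) : ℕ) = 1 := by rw [Fin.val_one']; exact Nat.mod_eq_of_lt (by omega)
  rw [Fin.val_add, h1]

lemma succ_iff (hn : 2 < n) (i j : Fin n) : ((i : ℕ) + 1) % n = (j : ℕ) ↔ j = i + 1 := by
  rw [Fin.ext_iff, val_add_one hn, eq_comm]

lemma pred_iff (hn : 2 < n) (i j : Fin n) : ((j : ℕ) + 1) % n = (i : ℕ) ↔ j = i - 1 := by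
  rw [succ_iff hn j i, eq_sub_iff_add_eq, eq_comm]

lemma succ_ne_pred (hn : 2 < n) (i : Fin n) : i + 1 ≠ i - 1 := by
  intro h
  have h2 : i + 1 + 1 = i := by rw [h]; exact sub_add_cancel i 1
  have hv : (((i : ℕ) + 1) % n + 1) % n = (i : ℕ) := by
    have := congrArg Fin.val h2
    rwa [val_add_one hn, val_add_one hn] at this
  have hlt := i.isLt
  by_cases hc : (i : ℕ) + 1 = n
  · rw [hc, Nat.mod_self, Nat.mod_eq_of_lt (by omega : (0:ℕ) + 1 < n)] at hv
    omega
  · have hlt1 : (i : ℕ) + 1 < n := by omega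
    rw [Nat.mod_eq_of_lt hlt1] at hv
    by_cases hc2 : (i : ℕ) + 2 = n
    · rw [show (i : ℕ) + 1 + 1 = n by omega, Nat.mod_self] at hv
      omega
    · rw [Nat.mod_eq_of_lt (by omega)] at hv
      omega

lemma cycAdj_apply (hn : 2 < n) (i j : Fin n) :
    cycAdj n i j = (if j = i + 1 then 1 else 0) + (if j = i - 1 then 1 else 0) := by
  have hne := succ_ne_pred hn i
  rw [cycAdj]
  simp only [succ_iff hn, pred_iff hn]
  by_cases h1 : j = i + 1 <;> by_cases h2 : j = i - 1
  · exact absurd (h1 ▸ h2) hne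
  · simp [h1, h2, hne]
  · simp [h1, h2, Ne.symm hne]
  · have h2' : ¬ i = j + 1 := fun hh => h2 (by rw [hh, add_sub_cancel_right])
    simp [h1, h2, h2']

lemma Q_apply (hn : 2 < n) (i j : Fin n) :
    defLap (cycAdj n) (-1) i j =
      (if j = i then 2 else 0) + (if j = i + 1 then 1 else 0) + (if j = i - 1 then 1 else 0) := by
  haveI : NeZero n := ⟨by omega⟩
  have hD : defLap (cycAdj n) (-1) = degMat (cycAdj n) + cycAdj n := by
    simp only [defLap, neg_one_sq, one_smul, neg_one_smul, sub_neg_eq_add]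
    abel
  have hrow : ∀ i : Fin n, ∑ j, cycAdj n i j = 2 := by
    intro i
    simp only [cycAdj_apply hn i]
    rw [Finset.sum_add_distrib, Finset.sum_ite_eq' Finset.univ (i+1) (fun _ => (1:ℝ)),
      Finset.sum_ite_eq' Finset.univ (i-1) (fun _ => (1:ℝ))]
    norm_num
  rw [hD, Matrix.add_apply]
  have hdeg : degMat (cycAdj n) i j = if j = i then 2 else 0 := by
    rw [degMat, Matrix.diagonal_apply, hrow]
    by_cases h : i = j
    · rw [if_pos h, if_pos h.symm]
    · rw [if_neg h, if_neg fun hh => h hh.symm]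
  rw [hdeg, cycAdj_apply hn]
  ring

lemma Q_mulVec (hn : 2 < n) (x : Fin n → ℝ) (i : Fin n) :
    (defLap (cycAdj n) (-1) *ᵥ x) i = 2 * x i + x (i + 1) + x (i - 1) := by
  rw [Matrix.mulVec, dotProduct]
  simp only [Q_apply hn i, add_mul, ite_mul, zero_mul, one_mul]
  rw [Finset.sum_add_distrib, Finset.sum_add_distrib,
    Finset.sum_ite_eq' Finset.univ i (fun j => 2 * x j),
    Finset.sum_ite_eq' Finset.univ (i+1) x,
    Finset.sum_ite_eq' Finset.univ (i-1) x]
  simp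

lemma Q_quad (hn : 2 < n) (x : Fin n → ℝ) :
    x ⬝ᵥ (defLap (cycAdj n) (-1) *ᵥ x) = ∑ i, (x i + x (i + 1)) ^ 2 := by
  haveI : NeZero n := ⟨by omega⟩
  have h1 : ∑ i : Fin n, x (i + 1) * x (i + 1) = ∑ i : Fin n, x i * x i :=
    Fintype.sum_equiv (Equiv.addRight (1 : Fin n)) (fun i => x (i + 1) * x (i + 1))
      (fun i => x i * x i) (fun i => rfl)
  have h2 : ∑ i : Fin n, x i * x (i - 1) = ∑ i : Fin n, x i * x (i + 1) :=
    Fintype.sum_equiv (Equiv.subRight (1 : Fin n)) (fun i => x i * x (i - 1))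
      (fun i => x i * x (i + 1)) (fun i => by
        show x i * x (i - 1) = x (i - 1) * x (i - 1 + 1)
        rw [sub_add_cancel, mul_comm])
  simp only [dotProduct, Q_mulVec hn]
  have e1 : ∀ i : Fin n, x i * (2 * x i + x (i + 1) + x (i - 1)) =
      2 * (x i * x i) + x i * x (i + 1) + x i * x (i - 1) := fun i => by ring
  have e2 : ∀ i : Fin n, (x i + x (i + 1)) ^ 2 =
      x i * x i + 2 * (x i * x (i + 1)) + x (i + 1) * x (i + 1) := fun i => by ring
  simp only [e1, e2]
  rw [Finset.sum_add_distrib, Finset.sum_add_distrib, Finset.sum_add_distrib,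
    Finset.sum_add_distrib, h1, h2, ← Finset.mul_sum, ← Finset.mul_sum]
  ring

lemma Q_herm (hn : 2 < n) : (defLap (cycAdj n) (-1)).IsHermitian := by
  haveI : NeZero n := ⟨by omega⟩
  ext i j
  rw [Matrix.conjTranspose_apply, star_trivial, Q_apply hn, Q_apply hn]
  have e1 : (j = i + 1) ↔ (i = j - 1) := by
    constructor <;> intro h <;> subst h <;> simp
  have e2 : (j = i - 1) ↔ (i = j + 1) := by
    constructor <;> intro h <;> subst h <;> simp
  simp only [← e1, ← e2, eq_comm (a := i) (b := j)]
  ring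

lemma Q_psd (hn : 2 < n) : (defLap (cycAdj n) (-1)).PosSemidef := by
  refine .of_dotProduct_mulVec_nonneg (Q_herm hn) fun x => ?_
  rw [star_trivial, Q_quad hn]
  exact Finset.sum_nonneg fun i _ => sq_nonneg _

lemma Q_ker (hn : 2 < n) {x : Fin n → ℝ} (h : defLap (cycAdj n) (-1) *ᵥ x = 0) :
    x = x 0 • (fun i : Fin n => (-1 : ℝ) ^ (i : ℕ)) := by
  haveI : NeZero n := ⟨by omega⟩
  have hquad : ∑ i, (x i + x (i + 1)) ^ 2 = 0 := by
    rw [← Q_quad hn, h, dotProduct_zero]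
  have step : ∀ i : Fin n, x (i + 1) = - x i := by
    intro i
    have := (Finset.sum_eq_zero_iff_of_nonneg (fun i _ => sq_nonneg (x i + x (i + 1)))).mp
      hquad i (Finset.mem_univ i)
    have := pow_eq_zero_iff (n := 2) (by norm_num) |>.mp this
    linarith
  have main : ∀ m : ℕ, ∀ hm : m < n, x ⟨m, hm⟩ = (-1 : ℝ) ^ m * x 0 := by
    intro m
    induction m with
    | zero => intro hm; simp [show (⟨0, hm⟩ : Fin n) = 0 from rfl]
    | succ m ih =>
      intro hm
      have hm' : m < n := by omega
      have hs : (⟨m + 1, hm⟩ : Fin n) = ⟨m, hm'⟩ + 1 := by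
        rw [Fin.ext_iff, val_add_one hn]
        simp [Nat.mod_eq_of_lt hm]
      rw [hs, step, ih hm']
      ring
  funext i
  have := main i.val i.isLt
  simpa [Fin.eta] using by rw [Fin.eta] at this; rw [this]; simp [mul_comm]

lemma neg_one_pow_mod (hev : Even n) (m : ℕ) : (-1 : ℝ) ^ (m % n) = (-1 : ℝ) ^ m := by
  conv_rhs => rw [← Nat.div_add_mod m n]
  rw [pow_add, pow_mul, Even.neg_one_pow hev, one_pow, one_mul]

lemma k_step (hn : 2 < n) (hev : Even n) (i : Fin n) :
    (-1 : ℝ) ^ ((i + 1 : Fin n) : ℕ) = - (-1 : ℝ) ^ (i : ℕ) := by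
  rw [val_add_one hn, neg_one_pow_mod hev, pow_succ]
  ring

lemma Q_mulVec_k (hn : 2 < n) (hev : Even n) :
    defLap (cycAdj n) (-1) *ᵥ (fun i : Fin n => (-1 : ℝ) ^ (i : ℕ)) = 0 := by
  haveI : NeZero n := ⟨by omega⟩
  funext i
  rw [Q_mulVec hn]
  have h1 := k_step hn hev i
  have h2 := k_step hn hev (i - 1)
  rw [sub_add_cancel] at h2
  simp only [Pi.zero_apply]
  rw [h1]
  have : (-1 : ℝ) ^ (((i : Fin n) - 1 : Fin n) : ℕ) = - (-1 : ℝ) ^ (i : ℕ) := by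
    linarith [h2]
  rw [this]
  ring

lemma k_dot_k (hn : 2 < n) :
    (fun i : Fin n => (-1 : ℝ) ^ (i : ℕ)) ⬝ᵥ (fun i : Fin n => (-1 : ℝ) ^ (i : ℕ)) = n := by
  have : ∀ i : Fin n, (-1 : ℝ) ^ (i : ℕ) * (-1 : ℝ) ^ (i : ℕ) = 1 := by
    intro i
    rw [← pow_add]
    exact Even.neg_one_pow ⟨(i : ℕ), rfl⟩
  simp [dotProduct, this]

end Aux

/-- For the cycle graph `C_n` with `n > 2` even, with `Q = Δ(−1) = D + A` the signless
Laplacian and `k` the alternating vector `kᵢ = (−1)^i`, the solution `exp(−tQ) x₀`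
converges as `t → ∞` to `(1/n)(kᵀx₀) k`. -/
theorem cycle_even_signless_laplacian_limit (n : ℕ) (hn : 2 < n) (hev : Even n)
    (x₀ : Fin n → ℝ) :
    Tendsto (fun t : ℝ => NormedSpace.exp ((-t) • defLap (cycAdj n) (-1)) *ᵥ x₀) atTop
      (nhds ((1 / (n : ℝ) * ((fun i : Fin n => (-1 : ℝ) ^ (i : ℕ)) ⬝ᵥ x₀)) •
        fun i : Fin n => (-1 : ℝ) ^ (i : ℕ))) := by
  haveI : NeZero n := ⟨by omega⟩
  set k : Fin n → ℝ := fun i : Fin n => (-1 : ℝ) ^ (i : ℕ) with hk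
  set Q : Matrix (Fin n) (Fin n) ℝ := defLap (cycAdj n) (-1) with hQ
  have hH : Q.IsHermitian := Q_herm hn
  have hpsd : Q.PosSemidef := Q_psd hn
  set U : Matrix (Fin n) (Fin n) ℝ := (hH.eigenvectorUnitary : Matrix (Fin n) (Fin n) ℝ) with hU
  set μ : Fin n → ℝ := hH.eigenvalues with hμ
  have hμ0 : ∀ i, 0 ≤ μ i := fun i => hpsd.eigenvalues_nonneg i
  have hsUU : star U * U = 1 := by
    have := hH.eigenvectorUnitary.2
    rw [Unitary.mem_iff] at this
    exact this.1
  have hUsU : U * star U = 1 := by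
    have := hH.eigenvectorUnitary.2
    rw [Unitary.mem_iff] at this
    exact this.2
  have hUinv : U⁻¹ = star U := Matrix.inv_eq_left_inv hsUU
  have hUunit : IsUnit U := isUnit_iff_exists.mpr ⟨star U, hUsU, hsUU⟩
  have hspec : Q = U * Matrix.diagonal μ * star U := by
    have := hH.spectral_theorem
    rwa [RCLike.ofReal_real_eq_id, Function.id_comp] at this
  -- the limit matrix
  set ind : Fin n → ℝ := fun i => if μ i = 0 then 1 else 0 with hind
  set L : Matrix (Fin n) (Fin n) ℝ := U * Matrix.diagonal ind * star U with hL
  -- rewrite the exponential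
  have hexp : ∀ t : ℝ, NormedSpace.exp ((-t) • Q) =
      U * Matrix.diagonal (fun i => Real.exp (-t * μ i)) * star U := by
    intro t
    have h1 : (-t) • Q = U * Matrix.diagonal (fun i => -t * μ i) * U⁻¹ := by
      rw [hUinv, hspec]
      have hdi : Matrix.diagonal (fun i => -t * μ i) = (-t) • Matrix.diagonal μ := by
        rw [← Matrix.diagonal_smul]
        congr 1
      rw [hdi, Matrix.mul_smul, Matrix.smul_mul]
    rw [h1, Matrix.exp_conj U _ hUunit, Matrix.exp_diagonal, hUinv]
    congr 2
    funext i
    rw [Pi.exp_def]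
    simp [Real.exp_eq_exp_ℝ]
  -- convergence
  have hcont : Continuous fun d : Fin n → ℝ => (U * Matrix.diagonal d * star U) *ᵥ x₀ :=
    (((continuous_const.matrix_mul continuous_id.matrix_diagonal).matrix_mul
      continuous_const).matrix_mulVec continuous_const)
  have hd : Tendsto (fun t : ℝ => fun i => Real.exp (-t * μ i)) atTop (nhds ind) := by
    rw [tendsto_pi_nhds]
    intro i
    by_cases h : μ i = 0
    · simpa [hind, h] using (tendsto_const_nhds : Tendsto (fun _ : ℝ => (1:ℝ)) atTop _)
    · have hpos : 0 < μ i := lt_of_le_of_ne (hμ0 i) (Ne.symm h)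
      have hbot : Tendsto (fun t : ℝ => -t * μ i) atTop atBot :=
        (tendsto_mul_const_atBot_of_pos hpos).mpr tendsto_neg_atTop_atBot
      have hexp0 : Tendsto (fun t : ℝ => Real.exp (-t * μ i)) atTop (nhds 0) :=
        Real.tendsto_exp_atBot.comp hbot
      simpa [hind, h] using hexp0
  have hT : Tendsto (fun t : ℝ => NormedSpace.exp ((-t) • Q) *ᵥ x₀) atTop
      (nhds (L *ᵥ x₀)) := by
    have h := (hcont.tendsto ind).comp hd
    have heq : (fun t : ℝ => NormedSpace.exp ((-t) • Q) *ᵥ x₀) =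
        (fun d : Fin n → ℝ => (U * Matrix.diagonal d * star U) *ᵥ x₀) ∘
          (fun t : ℝ => fun i => Real.exp (-t * μ i)) := by
      funext t
      simp only [Function.comp]
      rw [hexp t]
    rw [heq]
    exact h
  -- identify the limit
  have hQL : Q * L = 0 := by
    rw [hspec, hL]
    rw [Matrix.mul_assoc, Matrix.mul_assoc, ← Matrix.mul_assoc (star U) (U * Matrix.diagonal ind) (star U),
      ← Matrix.mul_assoc (star U) U (Matrix.diagonal ind), hsUU, one_mul,
      ← Matrix.mul_assoc (Matrix.diagonal μ) (Matrix.diagonal ind) (star U),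
      Matrix.diagonal_mul_diagonal]
    have : (fun i => μ i * ind i) = fun _ => (0 : ℝ) := by
      funext i
      by_cases h : μ i = 0 <;> simp [hind, h]
    rw [this]
    simp
  have hLk : L *ᵥ k = k := by
    have hQk : Q *ᵥ k = 0 := Q_mulVec_k hn hev
    have hDsU : Matrix.diagonal μ * star U = star U * Q := by
      rw [hspec, ← Matrix.mul_assoc, ← Matrix.mul_assoc, hsUU, one_mul]
    have hw : Matrix.diagonal μ *ᵥ (star U *ᵥ k) = 0 := by
      rw [Matrix.mulVec_mulVec, hDsU, ← Matrix.mulVec_mulVec, hQk, Matrix.mulVec_zero]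
    have hPw : Matrix.diagonal ind *ᵥ (star U *ᵥ k) = star U *ᵥ k := by
      funext i
      have hwi : μ i * (star U *ᵥ k) i = 0 := by
        have := congrFun hw i
        simpa [Matrix.mulVec_diagonal] using this
      rw [Matrix.mulVec_diagonal]
      by_cases h : μ i = 0
      · simp [hind, h]
      · have : (star U *ᵥ k) i = 0 := by
          rcases mul_eq_zero.mp hwi with h' | h'
          · exact absurd h' h
          · exact h'
        simp [hind, h, this]
    rw [hL, ← Matrix.mulVec_mulVec, ← Matrix.mulVec_mulVec, hPw, Matrix.mulVec_mulVec, hUsU,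
      Matrix.one_mulVec]
  have hdiagstar : (Matrix.diagonal ind)ᴴ = Matrix.diagonal ind := by
    rw [Matrix.diagonal_conjTranspose]
    congr 1
  have hLherm : Lᴴ = L := by
    rw [hL]
    rw [Matrix.conjTranspose_mul, Matrix.conjTranspose_mul, hdiagstar]
    rw [show (star U)ᴴ = U from by rw [← Matrix.star_eq_conjTranspose, star_star]]
    rw [show Uᴴ = star U from (Matrix.star_eq_conjTranspose U).symm]
    rw [Matrix.mul_assoc]
  have hLsym : Lᵀ = L := by
    have ht : Lᵀ = Lᴴ := by
      ext i j
      simp [Matrix.conjTranspose_apply]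
    rw [ht, hLherm]
  set y : Fin n → ℝ := L *ᵥ x₀ with hy
  have hQy : Q *ᵥ y = 0 := by
    rw [hy, Matrix.mulVec_mulVec, hQL, Matrix.zero_mulVec]
  have hyk : y = y 0 • k := Q_ker hn hQy
  have hdot1 : k ⬝ᵥ y = k ⬝ᵥ x₀ := by
    rw [hy, dotProduct_mulVec]
    congr 1
    rw [← hLsym, Matrix.vecMul_transpose]
    exact hLk
  have hdot2 : k ⬝ᵥ y = y 0 * n := by
    conv_lhs => rw [hyk]
    rw [dotProduct_smul, k_dot_k hn]
    simp
  have hnne : (n : ℝ) ≠ 0 := by positivity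
  have hy0 : y 0 = 1 / (n : ℝ) * (k ⬝ᵥ x₀) := by
    have hh : y 0 * n = k ⬝ᵥ x₀ := by rw [← hdot2, hdot1]
    rw [← hh]
    field_simp
  have hfinal : L *ᵥ x₀ = (1 / (n : ℝ) * (k ⬝ᵥ x₀)) • k := by
    rw [← hy, hyk, hy0]
  rw [← hfinal]
  exact hT
end

section
/- Let K_{m,n} be the complete bipartite graph with parts of sizes m ≥ 2 and n ≥ 2, and Δ(s) = s²(D − I) − sA + I its deformed Laplacian (an (m+n)×(m+n) matrix). Then Δ(s) is positive definite for every real s with |s| > 1 or |s| < 1/√((m−1)(n−1)), and for every s with 1/√((m−1)(n−1)) < |s| < 1 there exists a vector v with vᵀΔ(s)v < 0 (so the system ẋ = −Δ(s)x is asymptotically stable in the first case and unstable in the second). -/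
open Matrix Filter

/-- Adjacency matrix of the complete bipartite graph `K_{m,n}` on `Fin m ⊕ Fin n`:
two vertices are adjacent iff they lie in different parts. -/
noncomputable def bipAdj (m n : ℕ) : Matrix (Fin m ⊕ Fin n) (Fin m ⊕ Fin n) ℝ :=
  fun u v => if u.isLeft ≠ v.isLeft then 1 else 0

lemma defLap_mv {V : Type} [Fintype V] [DecidableEq V] (A : Matrix V V ℝ) (s : ℝ)
    (v : V → ℝ) (u : V) :
    (defLap A s *ᵥ v) u = s^2 * ((∑ j, A u j) * v u - v u) - s * (A *ᵥ v) u + v u := by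
  simp [defLap, degMat, Matrix.add_mulVec, Matrix.sub_mulVec, Matrix.smul_mulVec,
    Matrix.one_mulVec, mulVec_diagonal, mul_sub]

lemma bip_cardR (m n : ℕ) :
    ((Finset.univ.filter (fun x : Fin m ⊕ Fin n => x.isRight = true)).card : ℝ) = n := by
  rw [Finset.card_filter, Fintype.sum_sum_type]; simp

lemma bip_cardL (m n : ℕ) :
    ((Finset.univ.filter (fun x : Fin m ⊕ Fin n => x.isLeft = true)).card : ℝ) = m := by
  rw [Finset.card_filter, Fintype.sum_sum_type]; simp

lemma mv_inl (m n : ℕ) (s : ℝ) (v : Fin m ⊕ Fin n → ℝ) (i : Fin m) :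
    (defLap (bipAdj m n) s *ᵥ v) (Sum.inl i) =
      (s^2*((n:ℝ)-1)+1) * v (Sum.inl i) - s * ∑ j, v (Sum.inr j) := by
  rw [defLap_mv]
  simp [bipAdj, mulVec, dotProduct, Fintype.sum_sum_type, bip_cardR]
  ring

lemma mv_inr (m n : ℕ) (s : ℝ) (v : Fin m ⊕ Fin n → ℝ) (j : Fin n) :
    (defLap (bipAdj m n) s *ᵥ v) (Sum.inr j) =
      (s^2*((m:ℝ)-1)+1) * v (Sum.inr j) - s * ∑ i, v (Sum.inl i) := by
  rw [defLap_mv]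
  simp [bipAdj, mulVec, dotProduct, Fintype.sum_sum_type, bip_cardL]
  ring

lemma quad_eq (m n : ℕ) (s : ℝ) (v : Fin m ⊕ Fin n → ℝ) :
    v ⬝ᵥ (defLap (bipAdj m n) s *ᵥ v) =
      (s^2*((n:ℝ)-1)+1) * ∑ i, (v (Sum.inl i))^2
      + (s^2*((m:ℝ)-1)+1) * ∑ j, (v (Sum.inr j))^2
      - 2*s*(∑ i, v (Sum.inl i))*(∑ j, v (Sum.inr j)) := by
  have hx : ∑ i, v (Sum.inl i) * ((s^2*((n:ℝ)-1)+1) * v (Sum.inl i) - s * ∑ j, v (Sum.inr j))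
      = (s^2*((n:ℝ)-1)+1) * (∑ i, (v (Sum.inl i))^2)
        - s * (∑ i, v (Sum.inl i)) * (∑ j, v (Sum.inr j)) := by
    simp only [mul_sub, Finset.sum_sub_distrib, ← Finset.sum_mul]
    congr 1
    · rw [Finset.mul_sum]; exact Finset.sum_congr rfl fun i _ => by ring
    · ring
  have hy : ∑ j, v (Sum.inr j) * ((s^2*((m:ℝ)-1)+1) * v (Sum.inr j) - s * ∑ i, v (Sum.inl i))
      = (s^2*((m:ℝ)-1)+1) * (∑ j, (v (Sum.inr j))^2)
        - s * (∑ i, v (Sum.inl i)) * (∑ j, v (Sum.inr j)) := by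
    simp only [mul_sub, Finset.sum_sub_distrib, ← Finset.sum_mul]
    congr 1
    · rw [Finset.mul_sum]; exact Finset.sum_congr rfl fun i _ => by ring
    · ring
  simp only [dotProduct, Fintype.sum_sum_type, mv_inl, mv_inr, hx, hy]
  ring

lemma defLap_herm (m n : ℕ) (s : ℝ) : (defLap (bipAdj m n) s).IsHermitian := by
  have hA : (bipAdj m n)ᵀ = bipAdj m n := by
    ext u w
    simp only [bipAdj, Matrix.transpose_apply]
    congr 1
    simp [ne_comm]
  have hD : (defLap (bipAdj m n) s)ᵀ = defLap (bipAdj m n) s := by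
    unfold defLap degMat
    rw [Matrix.transpose_add, Matrix.transpose_sub, Matrix.transpose_smul,
      Matrix.transpose_smul, Matrix.transpose_sub, Matrix.transpose_one, hA,
      Matrix.diagonal_transpose]
  show _ᴴ = _
  ext u w
  rw [Matrix.conjTranspose_apply, star_trivial]
  conv_rhs => rw [← hD]
  rfl

set_option maxHeartbeats 1600000 in
/-- For the complete bipartite graph `K_{m,n}` (`m, n ≥ 2`): `Δ(s)` is positive definite
for `|s| > 1` or `|s| < 1/√((m−1)(n−1))`, and for `1/√((m−1)(n−1)) < |s| < 1` there is
`v` with `vᵀ Δ(s) v < 0`. -/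
theorem completeBipartite_defLap_stability (m n : ℕ) (hm : 2 ≤ m) (hn : 2 ≤ n) (s : ℝ) :
    ((1 < |s| ∨ |s| < 1 / Real.sqrt (((m : ℝ) - 1) * ((n : ℝ) - 1))) →
      (defLap (bipAdj m n) s).PosDef) ∧
    (1 / Real.sqrt (((m : ℝ) - 1) * ((n : ℝ) - 1)) < |s| → |s| < 1 →
      ∃ v : Fin m ⊕ Fin n → ℝ, v ⬝ᵥ (defLap (bipAdj m n) s *ᵥ v) < 0) := by
  have hm2 : (2:ℝ) ≤ (m:ℝ) := by exact_mod_cast hm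
  have hn2 : (2:ℝ) ≤ (n:ℝ) := by exact_mod_cast hn
  set c : ℝ := ((m:ℝ)-1)*((n:ℝ)-1) with hc
  have hc1 : (1:ℝ) ≤ c := by nlinarith
  have hcpos : (0:ℝ) < c := by linarith
  set a : ℝ := s^2*((n:ℝ)-1)+1 with hadef
  set b : ℝ := s^2*((m:ℝ)-1)+1 with hbdef
  have ha : (0:ℝ) < a := by nlinarith [sq_nonneg s]
  have hb : (0:ℝ) < b := by nlinarith [sq_nonneg s]
  have hab_id : a*b - s^2*((m:ℝ)*(n:ℝ)) = (c*s^2 - 1)*(s^2 - 1) := by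
    rw [hadef, hbdef, hc]; ring
  constructor
  · intro h
    have hab : s^2*((m:ℝ)*(n:ℝ)) < a*b := by
      rcases h with h | h
      · have hs2 : 1 < s^2 := by nlinarith [sq_abs s, abs_nonneg s]
        have t1 : 0 < s^2 - 1 := by linarith
        have t2 : 0 < c*s^2 - 1 := by nlinarith
        nlinarith [mul_pos t2 t1]
      · have h' : |s| * Real.sqrt c < 1 := by
          rwa [lt_div_iff₀ (Real.sqrt_pos.mpr hcpos)] at h
        have hcs : c * s^2 < 1 := by
          have hsq : (|s| * Real.sqrt c)^2 < 1 := by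
            nlinarith [abs_nonneg s, Real.sqrt_nonneg c,
              mul_nonneg (abs_nonneg s) (Real.sqrt_nonneg c)]
          rw [mul_pow, sq_abs, Real.sq_sqrt hcpos.le] at hsq
          linarith [hsq]
        have hs2 : s^2 < 1 := by
          nlinarith [mul_nonneg (sq_nonneg s) (by linarith : (0:ℝ) ≤ c - 1)]
        nlinarith [mul_pos_of_neg_of_neg (show c*s^2 - 1 < 0 by linarith) (show s^2 - 1 < 0 by linarith)]
    refine posDef_iff_dotProduct_mulVec.mpr ⟨defLap_herm m n s, fun x hx => ?_⟩
    rw [star_trivial, quad_eq, ← hadef, ← hbdef]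
    set X := ∑ i, x (Sum.inl i) with hX
    set Y := ∑ j, x (Sum.inr j) with hY
    set Sx := ∑ i, (x (Sum.inl i))^2 with hSx
    set Sy := ∑ j, (x (Sum.inr j))^2 with hSy
    have hSxnn : 0 ≤ Sx := Finset.sum_nonneg fun i _ => sq_nonneg _
    have hSynn : 0 ≤ Sy := Finset.sum_nonneg fun j _ => sq_nonneg _
    have hCSx : X^2 ≤ (m:ℝ) * Sx := by
      simpa using sq_sum_le_card_mul_sum_sq (s := Finset.univ) (f := fun i => x (Sum.inl i))
    have hCSy : Y^2 ≤ (n:ℝ) * Sy := by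
      simpa using sq_sum_le_card_mul_sum_sq (s := Finset.univ) (f := fun j => x (Sum.inr j))
    have hvpos : 0 < Sx ∨ 0 < Sy := by
      by_contra hcon
      push_neg at hcon
      have hSx0 : Sx = 0 := le_antisymm hcon.1 hSxnn
      have hSy0 : Sy = 0 := le_antisymm hcon.2 hSynn
      apply hx
      funext u
      rcases u with i | j
      · have := (Finset.sum_eq_zero_iff_of_nonneg (fun i _ => sq_nonneg (x (Sum.inl i)))).mp hSx0 i (Finset.mem_univ i)
        exact pow_eq_zero_iff (by norm_num) |>.mp this
      · have := (Finset.sum_eq_zero_iff_of_nonneg (fun j _ => sq_nonneg (x (Sum.inr j)))).mp hSy0 j (Finset.mem_univ j)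
        exact pow_eq_zero_iff (by norm_num) |>.mp this
    by_cases hx0 : 0 < Sx
    · by_cases hy0 : 0 < Sy
      · have habs : 2*s*X*Y ≤ 2 * |s| * |X| * |Y| := by
          calc 2*s*X*Y ≤ |2*s*X*Y| := le_abs_self _
          _ = 2 * |s| * |X| * |Y| := by rw [abs_mul, abs_mul, abs_mul]; norm_num
        have hlt : 2 * |s| * |X| * |Y| < a*Sx + b*Sy := by
          apply lt_of_pow_lt_pow_left₀ 2
            (add_nonneg (mul_nonneg ha.le hSxnn) (mul_nonneg hb.le hSynn))
          have e1 : (2 * |s| * |X| * |Y|)^2 = 4*s^2*(X^2*Y^2) := by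
            rw [mul_pow, mul_pow, mul_pow, sq_abs, sq_abs, sq_abs]; ring
          rw [e1]
          have hXY : X^2*Y^2 ≤ ((m:ℝ)*Sx)*((n:ℝ)*Sy) :=
            mul_le_mul hCSx hCSy (sq_nonneg _) (mul_nonneg (Nat.cast_nonneg m) hSxnn)
          calc 4*s^2*(X^2*Y^2) ≤ 4*s^2*(((m:ℝ)*Sx)*((n:ℝ)*Sy)) := by
                have h4s : (0:ℝ) ≤ 4*s^2 := by positivity
                exact mul_le_mul_of_nonneg_left hXY h4s
            _ = 4*(s^2*((m:ℝ)*(n:ℝ)))*(Sx*Sy) := by ring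
            _ < 4*(a*b)*(Sx*Sy) := by
                have := mul_pos hx0 hy0
                nlinarith
            _ ≤ (a*Sx+b*Sy)^2 := by nlinarith [sq_nonneg (a*Sx - b*Sy)]
        linarith
      · have hSy0 : Sy = 0 := le_antisymm (not_lt.mp hy0) hSynn
        have hY0 : Y = 0 := by
          have : Y^2 ≤ 0 := by rw [hSy0] at hCSy; linarith
          nlinarith [sq_nonneg Y]
        rw [hY0, hSy0]
        have : 0 < a * Sx := mul_pos ha hx0
        linarith
    · have hSx0 : Sx = 0 := le_antisymm (not_lt.mp hx0) hSxnn
      have hy0 : 0 < Sy := by rcases hvpos with h' | h'; exact absurd h' hx0; exact h'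
      have hX0 : X = 0 := by
        have : X^2 ≤ 0 := by rw [hSx0] at hCSx; linarith
        nlinarith [sq_nonneg X]
      rw [hX0, hSx0]
      have : 0 < b * Sy := mul_pos hb hy0
      linarith
  · intro h1 h2
    have hs2 : s^2 < 1 := by nlinarith [sq_abs s, abs_nonneg s]
    have h' : 1 < |s| * Real.sqrt c := by
      rw [div_lt_iff₀ (Real.sqrt_pos.mpr hcpos)] at h1
      linarith
    have hcs : 1 < c * s^2 := by
      have hsq : 1 < (|s| * Real.sqrt c)^2 := by
        nlinarith [mul_nonneg (abs_nonneg s) (Real.sqrt_nonneg c)]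
      rw [mul_pow, sq_abs, Real.sq_sqrt hcpos.le] at hsq
      linarith [hsq]
    have hneg : a*b - s^2*((m:ℝ)*(n:ℝ)) < 0 := by
      rw [hab_id]
      exact mul_neg_of_pos_of_neg (by linarith) (by linarith)
    refine ⟨Sum.elim (fun _ => 1) (fun _ => s*(m:ℝ)/b), ?_⟩
    rw [quad_eq]
    simp only [Sum.elim_inl, Sum.elim_inr, one_pow, Finset.sum_const, Finset.card_univ,
      Fintype.card_fin, nsmul_eq_mul, mul_one]
    rw [← hadef, ← hbdef]
    have key : a*(m:ℝ) + b*((n:ℝ)*(s*(m:ℝ)/b)^2) - 2*s*(m:ℝ)*((n:ℝ)*(s*(m:ℝ)/b))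
        = (m:ℝ)*(a*b - s^2*((m:ℝ)*(n:ℝ)))/b := by
      field_simp
      ring
    calc a*(m:ℝ) + b*((n:ℝ)*(s*(m:ℝ)/b)^2) - 2*s*(m:ℝ)*((n:ℝ)*(s*(m:ℝ)/b))
        = (m:ℝ)*(a*b - s^2*((m:ℝ)*(n:ℝ)))/b := key
      _ < 0 := by
          apply div_neg_of_neg_of_pos _ hb
          nlinarith
end
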